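/- Let L be a plan library for a goal G and N a positive integer, and let P_L^N(G) be its STRIPS compilation. In every state s reachable from the initial state I_L = {top(0)} by applying actions of P_L^N(G), exactly one of the fluents top(0),…,top(N) is true. -/
import Mathlib


/-- Kinds of nodes of a plan library: AND nodes, OR nodes, and leaves
(primitive actions). -/
inductive NodeKind where
  | andNode
  | orNode
  | leaf
deriving DecidableEq

/-- A plan library for a goal: a rooted AND/OR graph (possibly cyclic) over
nodes `ν`, with primitive actions labelled by `α`.  The root is an OR node;
children of OR nodes are AND nodes or leaves, children of AND nodes are OR
nodes or leaves, and the children of each AND node `n` are partially ordered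
by `ord n`. -/
structure PlanLibrary (ν α : Type) where
  root : ν
  kind : ν → NodeKind
  children : ν → Set ν
  /-- `ord n n' n''` means child `n'` of `n` must come before child `n''`. -/
  ord : ν → ν → ν → Prop
  /-- the primitive action carried by a leaf node -/
  label : ν → α
  root_or : kind root = NodeKind.orNode
  or_children : ∀ n, kind n = NodeKind.orNode →
    ∀ n' ∈ children n, kind n' = NodeKind.andNode ∨ kind n' = NodeKind.leaf
  and_children : ∀ n, kind n = NodeKind.andNode →
    ∀ n' ∈ children n, kind n' = NodeKind.orNode ∨ kind n' = NodeKind.leaf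
  leaf_children : ∀ n, kind n = NodeKind.leaf → children n = ∅
  ord_irrefl : ∀ n n', ¬ ord n n' n'
  ord_trans : ∀ n a b c, ord n a b → ord n b c → ord n a c

/-- Fluents of the compiled problem `P_L^N(G)`: `top i`, `started n i`,
`finished n i` for nodes `n` and stack levels `i`. -/
inductive LFluent (ν : Type) where
  | top (i : ℕ)
  | started (n : ν) (i : ℕ)
  | finished (n : ν) (i : ℕ)
deriving DecidableEq

/-- Actions of the compiled problem: `start n n' i` (a call from node `n` to
its child `n'` at level `i`), `endAnd n i` (termination of the calls made
from AND node `n`), and `endOr n n' i` (termination of the call from OR node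
`n` to its child `n'`). -/
inductive LAct (ν : Type) where
  | start (n n' : ν) (i : ℕ)
  | endAnd (n : ν) (i : ℕ)
  | endOr (n n' : ν) (i : ℕ)
deriving DecidableEq

/-- A STRIPS problem with negative preconditions: a set `acts` of available
actions, an initial state, and positive preconditions, negative
preconditions, add and delete lists for each action. -/
structure StripsNeg (F A : Type) where
  acts : Set A
  I : Set F
  pre : A → Set F
  npre : A → Set F
  add : A → Set F
  del : A → Set F

namespace StripsNeg

variable {F A : Type}

/-- The result of applying action `a` in state `s`: `(s \ Del(a)) ∪ Add(a)`. -/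
def applyA (P : StripsNeg F A) (s : Set F) (a : A) : Set F := (s \ P.del a) ∪ P.add a

/-- `Exec P s π t`: the action sequence `π` consists of actions of `P`, is
applicable successively from state `s` (positive preconditions true, negative
preconditions false), and leads to state `t`. -/
inductive Exec (P : StripsNeg F A) : Set F → List A → Set F → Prop
  | nil (s : Set F) : Exec P s [] s
  | cons {s t : Set F} {a : A} {π : List A} :
      a ∈ P.acts → P.pre a ⊆ s → (∀ p ∈ P.npre a, p ∉ s) →
      Exec P (P.applyA s a) π t → Exec P s (a :: π) t

/-- `π` is a plan for goal `G` in `P`. -/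
def IsPlan (P : StripsNeg F A) (G : Set F) (π : List A) : Prop :=
  ∃ t, Exec P P.I π t ∧ G ⊆ t

/-- A state reachable from the initial state by applying actions of `P`. -/
def Reachable (P : StripsNeg F A) (s : Set F) : Prop :=
  ∃ π, Exec P P.I π s

/-- The cost of a plan: the sum of the costs of its actions. -/
def planCost (c : A → ℝ) (π : List A) : ℝ := (π.map c).sum

/-- An optimal plan for `G`: a plan for `G` of minimum cost among all plans
for `G`. -/
def IsOptimalPlan (P : StripsNeg F A) (c : A → ℝ) (G : Set F) (π : List A) : Prop :=
  P.IsPlan G π ∧ ∀ π', P.IsPlan G π' → planCost c π ≤ planCost c π'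

end StripsNeg

open NodeKind in
/-- The compilation `P_L^N(G)` of a plan library `L` with depth parameter `N`
into a STRIPS problem with negative preconditions.  Initial state `{top 0}`;
the goal is `{finished root 0}`.  (Levels range over `0,…,N`: calls that push
the stack are only available for `i < N`.)  The constant `i - 1` is truncated
subtraction, so the action `endOr root n' 0` adds `finished root 0` as the
special root rule prescribes. -/
def PlanLibrary.compile {ν α : Type} (L : PlanLibrary ν α) (N : ℕ) :
    StripsNeg (LFluent ν) (LAct ν) where
  acts := { a | match a with
    | .start n n' i =>
        n' ∈ L.children n ∧
        ((L.kind n = andNode ∧ L.kind n' = leaf ∧ i ≤ N) ∨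
         (L.kind n = andNode ∧ L.kind n' ≠ leaf ∧ i < N) ∨
         (L.kind n = orNode ∧ i < N))
    | .endAnd n i => L.kind n = andNode ∧ 1 ≤ i ∧ i ≤ N
    | .endOr n n' i =>
        L.kind n = orNode ∧ n' ∈ L.children n ∧ i ≤ N ∧ (1 ≤ i ∨ n = L.root) }
  I := {LFluent.top 0}
  pre := fun a => match a with
    | .start n n' i =>
        if L.kind n = andNode then
          {LFluent.top i, LFluent.started n i} ∪
            {p | ∃ n'', L.ord n n'' n' ∧ p = LFluent.finished n'' i}
        else
          {LFluent.top i, LFluent.started n i}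
    | .endAnd n i =>
        {LFluent.top i, LFluent.started n i} ∪
          {p | ∃ n' ∈ L.children n, p = LFluent.finished n' i}
    | .endOr n n' i => {LFluent.top i, LFluent.started n i, LFluent.finished n' i}
  npre := fun a => match a with
    | .start n n' i =>
        if L.kind n = andNode then
          insert (LFluent.finished n' (i + 1))
            {p | ∃ n'' ∈ L.children n, p = LFluent.started n'' i}
        else
          {p | ∃ n'' ∈ L.children n,
            p = LFluent.finished n'' (i + 1) ∨ p = LFluent.started n'' (i + 1)}
    | .endAnd _ _ => ∅
    | .endOr _ _ _ => ∅
  add := fun a => match a with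
    | .start n n' i =>
        if L.kind n = andNode ∧ L.kind n' = leaf then
          {LFluent.finished n' i}
        else
          {LFluent.top (i + 1), LFluent.started n' (i + 1)}
    | .endAnd n i => {LFluent.finished n (i - 1), LFluent.top (i - 1)}
    | .endOr n _ i => {LFluent.finished n (i - 1), LFluent.top (i - 1)}
  del := fun a => match a with
    | .start n n' i =>
        if L.kind n = andNode ∧ L.kind n' = leaf then
          (∅ : Set (LFluent ν))
        else
          {LFluent.top i}
    | .endAnd n i =>
        {LFluent.top i, LFluent.started n i} ∪
          {p | ∃ n' ∈ L.children n, p = LFluent.finished n' i}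
    | .endOr n n' i => {LFluent.top i, LFluent.started n i, LFluent.finished n' i}

lemma compile_top_step {ν α : Type} (L : PlanLibrary ν α) (N : ℕ)
    (s : Set (LFluent ν)) (a : LAct ν)
    (ha : a ∈ (L.compile N).acts) (hpre : (L.compile N).pre a ⊆ s)
    (hinv : ∃! i : ℕ, i ≤ N ∧ LFluent.top i ∈ s) :
    ∃! i : ℕ, i ≤ N ∧ LFluent.top i ∈ (L.compile N).applyA s a := by
  obtain ⟨i₀, ⟨hi₀, htop⟩, huniq⟩ := hinv
  cases a with
  | start n n' i =>
    simp only [PlanLibrary.compile, Set.mem_setOf_eq] at ha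
    obtain ⟨hch, hcases⟩ := ha
    have hiN : i ≤ N := by
      rcases hcases with ⟨_, _, h⟩ | ⟨_, _, h⟩ | ⟨_, h⟩ <;> omega
    have htopi : LFluent.top i ∈ s := by
      apply hpre
      simp only [PlanLibrary.compile]
      by_cases hk : L.kind n = NodeKind.andNode <;> simp [hk]
    have hii₀ : i = i₀ := huniq i ⟨hiN, htopi⟩
    by_cases hleaf : L.kind n = NodeKind.andNode ∧ L.kind n' = NodeKind.leaf
    · -- leaf case: state's top fluents unchanged
      refine ⟨i₀, ⟨hi₀, ?_⟩, ?_⟩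
      · simp only [PlanLibrary.compile, StripsNeg.applyA, if_pos hleaf]
        exact Or.inl ⟨htop, by simp⟩
      · rintro j ⟨hj, hmem⟩
        simp only [PlanLibrary.compile, StripsNeg.applyA, if_pos hleaf] at hmem
        rcases hmem with ⟨hmem, -⟩ | hmem
        · exact huniq j ⟨hj, hmem⟩
        · simp at hmem
    · -- push case: top i replaced by top (i+1)
      have hiN' : i < N := by
        rcases hcases with ⟨h1, h2, h3⟩ | ⟨_, _, h⟩ | ⟨_, h⟩
        · exact absurd ⟨h1, h2⟩ hleaf
        · exact h
        · exact h
      refine ⟨i + 1, ⟨by omega, ?_⟩, ?_⟩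
      · simp only [PlanLibrary.compile, StripsNeg.applyA, if_neg hleaf]
        exact Or.inr (by simp)
      · rintro j ⟨hj, hmem⟩
        simp only [PlanLibrary.compile, StripsNeg.applyA, if_neg hleaf,
          Set.mem_union, Set.mem_diff, Set.mem_insert_iff,
          Set.mem_singleton_iff] at hmem
        rcases hmem with ⟨hmem, hne⟩ | hmem | hmem
        · exfalso
          have : j = i₀ := huniq j ⟨hj, hmem⟩
          exact hne (by rw [this, hii₀])
        · injection hmem
        · exact absurd hmem (by simp)
  | endAnd n i =>
    simp only [PlanLibrary.compile, Set.mem_setOf_eq] at ha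
    obtain ⟨hk, h1, h2⟩ := ha
    have htopi : LFluent.top i ∈ s := by
      apply hpre; simp [PlanLibrary.compile]
    have hii₀ : i = i₀ := huniq i ⟨h2, htopi⟩
    refine ⟨i - 1, ⟨by omega, ?_⟩, ?_⟩
    · simp only [PlanLibrary.compile, StripsNeg.applyA]
      exact Or.inr (by simp)
    · rintro j ⟨hj, hmem⟩
      simp only [PlanLibrary.compile, StripsNeg.applyA, Set.mem_union,
        Set.mem_diff, Set.mem_insert_iff, Set.mem_singleton_iff,
        Set.mem_setOf_eq] at hmem
      rcases hmem with ⟨hmem, hne⟩ | hmem | hmem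
      · exfalso
        have : j = i₀ := huniq j ⟨hj, hmem⟩
        exact hne (Or.inl (Or.inl (by rw [this, hii₀])))
      · exact absurd hmem (by simp)
      · injection hmem
  | endOr n n' i =>
    simp only [PlanLibrary.compile, Set.mem_setOf_eq] at ha
    obtain ⟨hk, hch, hiN, -⟩ := ha
    have htopi : LFluent.top i ∈ s := by
      apply hpre; simp [PlanLibrary.compile]
    have hii₀ : i = i₀ := huniq i ⟨hiN, htopi⟩
    refine ⟨i - 1, ⟨by omega, ?_⟩, ?_⟩
    · simp only [PlanLibrary.compile, StripsNeg.applyA]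
      exact Or.inr (by simp)
    · rintro j ⟨hj, hmem⟩
      simp only [PlanLibrary.compile, StripsNeg.applyA, Set.mem_union,
        Set.mem_diff, Set.mem_insert_iff, Set.mem_singleton_iff] at hmem
      rcases hmem with ⟨hmem, hne⟩ | hmem | hmem
      · exfalso
        have : j = i₀ := huniq j ⟨hj, hmem⟩
        exact hne (Or.inl (by rw [this, hii₀]))
      · exact absurd hmem (by simp)
      · injection hmem

/-- let `L` be a plan library for a goal `G`, `N` a positive
integer, and `P_L^N(G) = L.compile N` its STRIPS compilation.  In every state
`s` reachable from the initial state `I_L = {top 0}` by applying actions of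
`P_L^N(G)`, exactly one of the fluents `top 0, …, top N` is true. -/
theorem compile_exactly_one_top
    {ν α : Type} (L : PlanLibrary ν α) (N : ℕ) (hN : 0 < N)
    (s : Set (LFluent ν)) (hs : (L.compile N).Reachable s) :
    ∃! i : ℕ, i ≤ N ∧ LFluent.top i ∈ s := by
  obtain ⟨π, hexec⟩ := hs
  have init : ∃! i : ℕ, i ≤ N ∧ LFluent.top i ∈ (L.compile N).I := by
    refine ⟨0, ⟨Nat.zero_le _, by simp [PlanLibrary.compile]⟩, ?_⟩
    rintro j ⟨-, hmem⟩
    simp only [PlanLibrary.compile, Set.mem_singleton_iff] at hmem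
    injection hmem
  clear hN
  revert init
  generalize (L.compile N).I = s₀ at hexec
  induction hexec with
  | nil => exact id
  | cons ha hpre hnpre _ ih =>
    intro hinv
    exact ih (compile_top_step L N _ _ ha hpre hinv)
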